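/- Fix integers s ≥ 1, r ≥ 2 and 1 ≤ p ≤ q, and let K_{p,q} be the complete bipartite graph with parts of sizes p and q. If p ≤ r ≤ min{s, p+q−1}, then there exist a constant K and n₀ such that for all n ≥ n₀, | ex_r(n, BM_{s+1} ∪ BK_{p,q}) − (p−1)·n | ≤ K. -/

import Mathlib

open Finset

/-- `H` is an `r`-uniform hypergraph (an `r`-graph): every hyperedge has exactly `r` vertices. -/
def IsUniform {V : Type*} (r : ℕ) (H : Finset (Finset V)) : Prop :=
  ∀ e ∈ H, e.card = r

/-- `H` contains a Berge copy of the graph with edge set `F`: there are an injection `g`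
of the vertices of `F` into the vertices of `H` and an injection `φ` of the edges of `F`
into the hyperedges of `H` such that `g '' e ⊆ φ e` for every edge `e` of `F`. -/
def ContainsBerge {α V : Type*} [DecidableEq α] [DecidableEq V]
    (F : Finset (Finset α)) (H : Finset (Finset V)) : Prop :=
  ∃ (g : α → V) (φ : Finset α → Finset V),
    Function.Injective g ∧ Set.InjOn φ ↑F ∧
      (∀ e ∈ F, φ e ∈ H) ∧ ∀ e ∈ F, e.image g ⊆ φ e

/-- `H` contains a copy (a subhypergraph isomorphic to) of the hypergraph with
vertex set `A` and edge set `F`. -/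
def ContainsCopy {α V : Type*} [DecidableEq α] [DecidableEq V]
    (A : Finset α) (F : Finset (Finset α)) (H : Finset (Finset V)) : Prop :=
  ∃ g : α → V, Set.InjOn g ↑A ∧ ∀ e ∈ F, e.image g ∈ H

/-- The edge set of the matching `M_t` consisting of `t` pairwise disjoint edges. -/
def matchingHG (t : ℕ) : Finset (Finset (Fin t × Fin 2)) :=
  Finset.univ.image fun i : Fin t => ({(i, 0), (i, 1)} : Finset (Fin t × Fin 2))

/-- The Turán number: the maximum number of hyperedges in an `r`-graph on `n` vertices
satisfying the freeness predicate `Free`. -/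
noncomputable def exr (n r : ℕ) (Free : Finset (Finset (Fin n)) → Prop) : ℕ :=
  sSup {m | ∃ H : Finset (Finset (Fin n)), IsUniform r H ∧ Free H ∧ H.card = m}

/-- The edge set of the complete bipartite graph `K_{p,q}`. -/
def completeBipartite (p q : ℕ) : Finset (Finset (Fin p ⊕ Fin q)) :=
  (Finset.univ ×ˢ Finset.univ).image
    fun x : Fin p × Fin q => ({Sum.inl x.1, Sum.inr x.2} : Finset (Fin p ⊕ Fin q))

-- Lemma A
lemma berge_matching_of_pairs {n t : ℕ} {H : Finset (Finset (Fin n))}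
    (h : Fin t → Finset (Fin n)) (P : Fin t → Finset (Fin n))
    (hmem : ∀ i, h i ∈ H) (hsub : ∀ i, P i ⊆ h i) (hcard : ∀ i, (P i).card = 2)
    (hinj : ∀ i j, i ≠ j → h i ≠ h j) (hdis : ∀ i j, i ≠ j → Disjoint (P i) (P j)) :
    ContainsBerge (matchingHG t) H := by
  classical
  have hne : ∀ i, (P i).Nonempty := fun i => Finset.card_pos.mp (by rw [hcard i]; norm_num)
  set a : Fin t → Fin n := fun i => (P i).min' (hne i) with ha
  set b : Fin t → Fin n := fun i => (P i).max' (hne i) with hb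
  have hab : ∀ i, a i ≠ b i := fun i =>
    ne_of_lt ((P i).min'_lt_max'_of_card (by rw [hcard i]; norm_num))
  have haP : ∀ i, a i ∈ P i := fun i => (P i).min'_mem (hne i)
  have hbP : ∀ i, b i ∈ P i := fun i => (P i).max'_mem (hne i)
  refine ⟨fun x => if x.2 = 0 then a x.1 else b x.1, fun e => e.sup (fun x => h x.1), ?_, ?_, ?_, ?_⟩
  · rintro ⟨i, k⟩ ⟨j, l⟩ hgeq
    simp only at hgeq
    have hij : i = j := by
      by_contra hijne
      have hd := hdis i j hijne
      have m1 : (if k = 0 then a i else b i) ∈ P i := by split <;> [exact haP i; exact hbP i]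
      have m2 : (if l = 0 then a j else b j) ∈ P j := by split <;> [exact haP j; exact hbP j]
      rw [hgeq] at m1
      exact (Finset.disjoint_left.mp hd m1) m2
    subst hij
    have hkl : k = l := by
      by_contra hklne
      rcases Fin.exists_fin_two.mp ⟨k, rfl⟩ with h2 | h2
      all_goals {
        fin_cases k <;> fin_cases l <;> simp_all [hab i, (hab i).symm] <;> exact hab i hgeq.symm
      }
    rw [hkl]
  · intro e he e' he' heq
    simp only [matchingHG, coe_image, Set.mem_image, mem_coe] at he he'
    obtain ⟨i, -, rfl⟩ := he
    obtain ⟨j, -, rfl⟩ := he'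
    simp only [Finset.sup_insert, Finset.sup_singleton] at heq
    simp only [sup_idem] at heq
    by_contra hne2
    have : i ≠ j := by rintro rfl; exact hne2 rfl
    exact hinj i j this heq
  · intro e he
    simp only [matchingHG, mem_image] at he
    obtain ⟨i, -, rfl⟩ := he
    simp only [Finset.sup_insert, Finset.sup_singleton, sup_idem]
    exact hmem i
  · intro e he
    simp only [matchingHG, mem_image] at he
    obtain ⟨i, -, rfl⟩ := he
    simp only [Finset.sup_insert, Finset.sup_singleton, sup_idem, image_insert, image_singleton]
    intro x hx
    simp only [mem_insert, mem_singleton] at hx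
    rcases hx with rfl | rfl
    · exact hsub i (by simpa using haP i)
    · exact hsub i (by simpa using hbP i)

-- Lemma B
lemma berge_kpq_of_system {n p q : ℕ} {H : Finset (Finset (Fin n))}
    (A : Fin p → Finset (Fin n)) (v : Fin q → Fin n) (u : Fin p → Fin n)
    (hA : ∀ i j, A i ∪ {v j} ∈ H)
    (hAinj : Function.Injective A)
    (hvinj : Function.Injective v)
    (huinj : Function.Injective u)
    (hu : ∀ i, u i ∈ A i)
    (hvA : ∀ j i, v j ∉ A i)
    (huv : ∀ i j, u i ≠ v j) :
    ContainsBerge (completeBipartite p q) H := by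
  classical
  have hmemCB : ∀ e ∈ completeBipartite p q, ∃ i j,
      e = ({Sum.inl i, Sum.inr j} : Finset (Fin p ⊕ Fin q)) := by
    intro e he
    simp only [completeBipartite, mem_image, mem_product] at he
    obtain ⟨⟨i, j⟩, -, rfl⟩ := he
    exact ⟨i, j, rfl⟩
  refine ⟨Sum.elim u v, fun e => e.sup (Sum.elim A (fun j => {v j})), ?_, ?_, ?_, ?_⟩
  · rintro (i | i) (j | j) hg <;> simp only [Sum.elim_inl, Sum.elim_inr] at hg
    · rw [huinj hg]
    · exact absurd hg (huv i j)
    · exact absurd hg.symm (huv j i)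
    · rw [hvinj hg]
  · intro e he e' he' heq
    obtain ⟨i, j, rfl⟩ := hmemCB e he
    obtain ⟨i', j', rfl⟩ := hmemCB e' he'
    simp only [Finset.sup_insert, Finset.sup_singleton, Sum.elim_inl, Sum.elim_inr] at heq
    have heq' : A i ∪ {v j} = A i' ∪ {v j'} := heq
    have hj : j = j' := by
      have : v j ∈ A i' ∪ {v j'} := by
        rw [← heq']; exact mem_union_right _ (mem_singleton_self _)
      rcases mem_union.mp this with h' | h'
      · exact absurd h' (hvA j i')
      · exact hvinj (mem_singleton.mp h')
    subst hj
    have hi : i = i' := by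
      apply hAinj
      have h1 : A i = (A i ∪ {v j}) \ {v j} := by
        rw [union_sdiff_right]
        rw [sdiff_singleton_eq_erase, erase_eq_of_notMem (hvA j i)]
      have h2 : A i' = (A i' ∪ {v j}) \ {v j} := by
        rw [union_sdiff_right]
        rw [sdiff_singleton_eq_erase, erase_eq_of_notMem (hvA j i')]
      rw [h1, h2, heq']
    rw [hi]
  · intro e he
    obtain ⟨i, j, rfl⟩ := hmemCB e he
    simp only [Finset.sup_insert, Finset.sup_singleton, Sum.elim_inl, Sum.elim_inr]
    exact hA i j
  · intro e he
    obtain ⟨i, j, rfl⟩ := hmemCB e he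
    simp only [Finset.sup_insert, Finset.sup_singleton, Sum.elim_inl, Sum.elim_inr,
      image_insert, image_singleton]
    intro x hx
    rcases mem_insert.mp hx with rfl | hx
    · exact mem_union_left _ (hu i)
    · rw [mem_singleton.mp hx]
      exact mem_union_right _ (mem_singleton_self _)

-- Lemma C : lower bound construction
lemma lower_construction {n s r p q : ℕ} (hr : 2 ≤ r) (hp : 1 ≤ p) (hpq : p ≤ q)
    (h1 : p ≤ r) (hrs : r ≤ s) (hrq : r ≤ p + q - 1) (hrn : r ≤ n) :
    ∃ H : Finset (Finset (Fin n)), IsUniform r H ∧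
      (¬ ContainsBerge (matchingHG (s+1)) H ∧ ¬ ContainsBerge (completeBipartite p q) H) ∧
      H.card = (p-1) * (n - r) := by
  classical
  set B : Finset (Fin n) :=
    (Finset.range r).attachFin (fun m hm => lt_of_lt_of_le (mem_range.mp hm) hrn) with hB
  have hmemB : ∀ x : Fin n, x ∈ B ↔ (x : ℕ) < r := by
    intro x; simp [hB, Finset.mem_attachFin]
  have hcardB : B.card = r := by simp [hB, Finset.card_attachFin]
  set em : Fin (p-1) → Fin n := fun i => ⟨i.1, lt_of_lt_of_le (lt_of_lt_of_le i.isLt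
    (by omega)) hrn⟩ with hem
  have hemB : ∀ i, em i ∈ B := by
    intro i; rw [hmemB]; exact lt_of_lt_of_le i.isLt (by omega)
  have heminj : Function.Injective em := by
    intro i j hij
    rw [hem] at hij
    simpa [Fin.ext_iff] using hij
  set A : Fin (p-1) → Finset (Fin n) := fun i => B.erase (em i) with hA
  have hAsub : ∀ i, A i ⊆ B := fun i => erase_subset _ _
  have hAcard : ∀ i, (A i).card = r - 1 := by
    intro i; rw [hA]; simp [card_erase_of_mem (hemB i), hcardB]
  have hAinj : Function.Injective A := by
    intro i j hij
    by_contra hne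
    have h1' : em j ∈ A i := by
      simp only [hA]
      exact mem_erase.mpr ⟨fun h => hne (heminj h).symm, hemB j⟩
    rw [hij] at h1'
    simp only [hA] at h1'
    exact (mem_erase.mp h1').1 rfl
  set H₀ : Finset (Finset (Fin n)) :=
    ((univ : Finset (Fin (p-1))) ×ˢ Bᶜ).image (fun x => A x.1 ∪ {x.2}) with hH₀
  have hmemH : ∀ e, e ∈ H₀ ↔ ∃ i v, v ∉ B ∧ e = A i ∪ {v} := by
    intro e
    simp only [hH₀, mem_image, mem_product, mem_univ, true_and, mem_compl, Prod.exists]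
    constructor
    · rintro ⟨i, v, hv, rfl⟩; exact ⟨i, v, hv, rfl⟩
    · rintro ⟨i, v, hv, rfl⟩; exact ⟨i, v, hv, rfl⟩
  have hvA : ∀ (v : Fin n) i, v ∉ B → v ∉ A i := fun v i hv h => hv (hAsub i h)
  -- uniformity
  have hUnif : IsUniform r H₀ := by
    intro e he
    obtain ⟨i, v, hv, rfl⟩ := (hmemH e).mp he
    rw [card_union_of_disjoint (disjoint_singleton_right.mpr (hvA v i hv)), hAcard i,
      card_singleton]
    omega
  -- recover components
  have hrecov : ∀ (i i' : Fin (p-1)) (v v' : Fin n), v ∉ B → v' ∉ B →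
      A i ∪ {v} = A i' ∪ {v'} → i = i' ∧ v = v' := by
    intro i i' v v' hv hv' heq
    have hveq : v = v' := by
      have : v' ∈ A i ∪ {v} := by rw [heq]; exact mem_union_right _ (mem_singleton_self _)
      rcases mem_union.mp this with h' | h'
      · exact absurd h' (hvA v' i hv')
      · exact (mem_singleton.mp h').symm
    subst hveq
    refine ⟨hAinj ?_, rfl⟩
    have e1 : A i = (A i ∪ {v}) \ {v} := by
      rw [union_sdiff_right, sdiff_singleton_eq_erase, erase_eq_of_notMem (hvA v i hv)]
    have e2 : A i' = (A i' ∪ {v}) \ {v} := by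
      rw [union_sdiff_right, sdiff_singleton_eq_erase, erase_eq_of_notMem (hvA v i' hv)]
    rw [e1, e2, heq]
  -- cardinality
  have hcardH : H₀.card = (p-1) * (n - r) := by
    rw [hH₀, card_image_of_injOn, card_product, card_univ, Fintype.card_fin, card_compl,
      hcardB, Fintype.card_fin]
    rintro ⟨i, v⟩ h1' ⟨i', v'⟩ h2' heq
    simp only [mem_coe, mem_product, mem_compl] at h1' h2'
    obtain ⟨he1, he2⟩ := hrecov i i' v v' h1'.2 h2'.2 heq
    simp [he1, he2]
  -- no Berge matching M_{s+1}
  have hnoM : ¬ ContainsBerge (matchingHG (s+1)) H₀ := by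
    rintro ⟨g, φ, ginj, φinj, hφH, hφsub⟩
    have hei : ∀ i : Fin (s+1), ({((i : Fin (s+1)), (0 : Fin 2)), (i, 1)} :
        Finset (Fin (s+1) × Fin 2)) ∈ matchingHG (s+1) :=
      fun i => mem_image.mpr ⟨i, mem_univ i, rfl⟩
    have hgin : ∀ (i : Fin (s+1)) (k : Fin 2),
        g (i, k) ∈ φ {(i, 0), (i, 1)} := by
      intro i k
      apply hφsub _ (hei i)
      apply mem_image_of_mem
      fin_cases k <;> simp
    have hwex : ∀ i : Fin (s+1), (if g (i, 0) ∈ B then g (i, 0) else g (i, 1)) ∈ B := by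
      intro i
      split
      · assumption
      · rename_i hg0
        by_contra hg1
        obtain ⟨k, v, hv, hev⟩ := (hmemH _).mp (hφH _ (hei i))
        have m0 := hgin i 0; have m1 := hgin i 1
        rw [hev] at m0 m1
        have e0 : g (i, 0) = v := by
          rcases mem_union.mp m0 with h' | h'
          · exact absurd h' (hvA _ k hg0)
          · exact mem_singleton.mp h'
        have e1 : g (i, 1) = v := by
          rcases mem_union.mp m1 with h' | h'
          · exact absurd h' (hvA _ k hg1)
          · exact mem_singleton.mp h'
        have : ((i : Fin (s+1)), (0 : Fin 2)) = (i, 1) := ginj (by rw [e0, e1])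
        simp at this
    set w : Fin (s+1) → Fin n := fun i => if g (i, 0) ∈ B then g (i, 0) else g (i, 1) with hw
    have hwinj : Function.Injective w := by
      intro i j hij
      simp only [hw] at hij
      have hi : ∃ ki : Fin 2, w i = g (i, ki) := by
        simp only [hw]; split <;> [exact ⟨0, rfl⟩; exact ⟨1, rfl⟩]
      have hj : ∃ kj : Fin 2, w j = g (j, kj) := by
        simp only [hw]; split <;> [exact ⟨0, rfl⟩; exact ⟨1, rfl⟩]
      obtain ⟨ki, hki⟩ := hi; obtain ⟨kj, hkj⟩ := hj
      have : ((i : Fin (s+1)), ki) = (j, kj) := by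
        apply ginj; rw [← hki, ← hkj]; simp only [hw]; exact hij
      exact (Prod.ext_iff.mp this).1
    have hle : s + 1 ≤ r := by
      have := Finset.card_le_card_of_injOn (s := univ) (t := B) w (fun i _ => hwex i)
        (fun x _ y _ hxy => hwinj hxy)
      simpa [hcardB] using this
    omega
  -- no Berge K_{p,q}
  have hnoK : ¬ ContainsBerge (completeBipartite p q) H₀ := by
    rintro ⟨g, φ, ginj, φinj, hφH, hφsub⟩
    have hCB : ∀ (i : Fin p) (j : Fin q),
        ({Sum.inl i, Sum.inr j} : Finset (Fin p ⊕ Fin q)) ∈ completeBipartite p q :=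
      fun i j => mem_image.mpr ⟨(i, j), mem_product.mpr ⟨mem_univ _, mem_univ _⟩, rfl⟩
    have hdeg : ∀ x : Fin p ⊕ Fin q, p ≤ (H₀.filter (fun e => g x ∈ e)).card := by
      intro x
      rcases x with i | j
      · have hq : q ≤ (H₀.filter (fun e => g (Sum.inl i) ∈ e)).card := by
          have hh := Finset.card_le_card_of_injOn (s := (univ : Finset (Fin q)))
            (t := H₀.filter (fun e => g (Sum.inl i) ∈ e))
            (fun j => φ {Sum.inl i, Sum.inr j}) ?_ ?_
          · simpa using hh
          · intro j _
            refine mem_filter.mpr ⟨hφH _ (hCB i j), ?_⟩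
            apply hφsub _ (hCB i j)
            exact mem_image_of_mem g (by simp)
          · intro j _ j' _ hjj
            have heq := φinj (mem_coe.mpr (hCB i j)) (mem_coe.mpr (hCB i j')) hjj
            have h2 : (Sum.inr j : Fin p ⊕ Fin q) ∈
                ({Sum.inl i, Sum.inr j'} : Finset (Fin p ⊕ Fin q)) := by
              rw [← heq]; simp
            simpa using h2
        exact le_trans hpq hq
      · have hq : p ≤ (H₀.filter (fun e => g (Sum.inr j) ∈ e)).card := by
          have hh := Finset.card_le_card_of_injOn (s := (univ : Finset (Fin p)))
            (t := H₀.filter (fun e => g (Sum.inr j) ∈ e))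
            (fun i => φ {Sum.inl i, Sum.inr j}) ?_ ?_
          · simpa using hh
          · intro i _
            refine mem_filter.mpr ⟨hφH _ (hCB i j), ?_⟩
            apply hφsub _ (hCB i j)
            exact mem_image_of_mem g (by simp)
          · intro i _ i' _ hii
            have heq := φinj (mem_coe.mpr (hCB i j)) (mem_coe.mpr (hCB i' j)) hii
            have h2 : (Sum.inl i : Fin p ⊕ Fin q) ∈
                ({Sum.inl i', Sum.inr j} : Finset (Fin p ⊕ Fin q)) := by
              rw [← heq]; simp
            simpa using h2
        exact hq
    have hcore : ∀ x : Fin p ⊕ Fin q, g x ∈ B := by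
      intro x
      by_contra hgB
      have hsub2 : H₀.filter (fun e => g x ∈ e) ⊆
          (univ : Finset (Fin (p-1))).image (fun i => A i ∪ {g x}) := by
        intro e he
        obtain ⟨he1, he2⟩ := mem_filter.mp he
        obtain ⟨k, v, hv, rfl⟩ := (hmemH e).mp he1
        have : g x = v := by
          rcases mem_union.mp he2 with h' | h'
          · exact absurd h' (hvA _ k hgB)
          · exact mem_singleton.mp h'
        exact mem_image.mpr ⟨k, mem_univ k, by rw [this]⟩
      have := le_trans (hdeg x) (le_trans (card_le_card hsub2)
        (le_trans card_image_le (by rw [card_univ, Fintype.card_fin])))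
      omega
    have hfinal : p + q ≤ r := by
      have hinj2 := Finset.card_le_card_of_injOn (s := univ) (t := B) g (fun x _ => hcore x)
        (fun x _ y _ hxy => ginj hxy)
      rw [card_univ, Fintype.card_sum, Fintype.card_fin, Fintype.card_fin, hcardB] at hinj2
      exact hinj2
    omega
  exact ⟨H₀, hUnif, ⟨hnoM, hnoK⟩, hcardH⟩

-- good pair systems (partial Berge matchings)
def GoodPairs {n : ℕ} (H : Finset (Finset (Fin n)))
    (M : Finset (Finset (Fin n) × Finset (Fin n))) : Prop :=
  (∀ x ∈ M, x.1 ∈ H ∧ x.2 ⊆ x.1 ∧ x.2.card = 2) ∧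
  ∀ x ∈ M, ∀ y ∈ M, x ≠ y → x.1 ≠ y.1 ∧ Disjoint x.2 y.2

lemma goodPairs_card_le {n : ℕ} {H : Finset (Finset (Fin n))}
    {M : Finset (Finset (Fin n) × Finset (Fin n))} (h : GoodPairs H M) :
    M.card ≤ H.card := by
  apply Finset.card_le_card_of_injOn Prod.fst (fun x hx => (h.1 x hx).1)
  intro x hx y hy hxy
  by_contra hne
  exact (h.2 x hx y hy hne).1 hxy

lemma upper_bound {n s r p q : ℕ} (hr : 2 ≤ r) (hp : 1 ≤ p) (hpq : p ≤ q)
    (h1 : p ≤ r) (hrs : r ≤ s)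
    {H : Finset (Finset (Fin n))} (hU : IsUniform r H)
    (hM : ¬ ContainsBerge (matchingHG (s+1)) H)
    (hK : ¬ ContainsBerge (completeBipartite p q) H) :
    H.card ≤ (p-1)*n + (s + 2^(2*s) + (q-1) * 2^(2^(2*s)) * 2^(2*s)) := by
  classical
  -- maximal good pair system
  set T : Set ℕ := {k | ∃ M, GoodPairs H M ∧ M.card = k} with hT
  have hT0 : 0 ∈ T := ⟨∅, ⟨fun x hx => absurd hx (notMem_empty x),
    fun x hx => absurd hx (notMem_empty x)⟩, card_empty⟩
  have hTbdd : BddAbove T := ⟨H.card, fun k hk => by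
    obtain ⟨M, hM', hMc⟩ := hk; exact hMc ▸ goodPairs_card_le hM'⟩
  obtain ⟨M, hGoodM, hMcard⟩ := Nat.sSup_mem ⟨0, hT0⟩ hTbdd
  set t := sSup T with htdef
  have hmax_all : ∀ M', GoodPairs H M' → M'.card ≤ t :=
    fun M' h => le_csSup hTbdd ⟨M', h, rfl⟩
  -- t ≤ s
  have hts : t ≤ s := by
    by_contra hts
    push_neg at hts
    obtain ⟨M', hM'sub, hM'card⟩ := Finset.exists_subset_card_eq
      (show s + 1 ≤ M.card by omega)
    have hGoodM' : GoodPairs H M' := ⟨fun x hx => hGoodM.1 x (hM'sub hx),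
      fun x hx y hy => hGoodM.2 x (hM'sub hx) y (hM'sub hy)⟩
    set fm : Fin (s+1) → (Finset (Fin n) × Finset (Fin n)) :=
      fun i => (M'.equivFin.symm (Fin.cast hM'card.symm i) : _) with hfm
    have hfmem : ∀ i, fm i ∈ M' := fun i => (M'.equivFin.symm (Fin.cast hM'card.symm i)).2
    have hfinj : ∀ i j, i ≠ j → fm i ≠ fm j := by
      intro i j hij hcon
      apply hij
      have := M'.equivFin.symm.injective (Subtype.ext hcon)
      simpa [Fin.ext_iff] using congrArg Fin.val this
    apply hM
    apply berge_matching_of_pairs (fun i => (fm i).1) (fun i => (fm i).2)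
    · exact fun i => (hGoodM'.1 _ (hfmem i)).1
    · exact fun i => (hGoodM'.1 _ (hfmem i)).2.1
    · exact fun i => (hGoodM'.1 _ (hfmem i)).2.2
    · exact fun i j hij => (hGoodM'.2 _ (hfmem i) _ (hfmem j) (hfinj i j hij)).1
    · exact fun i j hij => (hGoodM'.2 _ (hfmem i) _ (hfmem j) (hfinj i j hij)).2
  -- the covered vertex set W
  set W : Finset (Fin n) := M.biUnion (fun x => x.2) with hW
  have hWcard : W.card ≤ 2 * s := by
    have hb : W.card ≤ ∑ x ∈ M, x.2.card := Finset.card_biUnion_le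
    have hsum : ∑ x ∈ M, x.2.card = 2 * M.card := by
      rw [Finset.sum_congr rfl fun x hx => (hGoodM.1 x hx).2.2, Finset.sum_const,
        smul_eq_mul, mul_comm]
    omega
  set E₀ : Finset (Finset (Fin n)) := M.image Prod.fst with hE₀
  have hE₀sub : E₀ ⊆ H := by
    intro e he
    obtain ⟨x, hx, rfl⟩ := mem_image.mp he
    exact (hGoodM.1 x hx).1
  have hE₀card : E₀.card ≤ s := le_trans card_image_le (le_of_eq_of_le hMcard hts)
  -- maximality: every other edge has at most one vertex outside W
  have hmaxW : ∀ e ∈ H, e ∉ E₀ → (e \ W).card ≤ 1 := by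
    intro e heH heE
    by_contra hgt
    push_neg at hgt
    obtain ⟨x, hx, y, hy, hxy⟩ := Finset.one_lt_card.mp hgt
    have hxW : x ∉ W := (mem_sdiff.mp hx).2
    have hyW : y ∉ W := (mem_sdiff.mp hy).2
    have hxe : x ∈ e := (mem_sdiff.mp hx).1
    have hye : y ∈ e := (mem_sdiff.mp hy).1
    have hnotin : (e, ({x, y} : Finset (Fin n))) ∉ M := fun hmem =>
      heE (mem_image_of_mem Prod.fst hmem)
    have hno : ∀ z ∈ M, e ≠ z.1 ∧ Disjoint ({x,y} : Finset (Fin n)) z.2 := by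
      intro z hz
      constructor
      · intro hez; exact heE (hez ▸ mem_image_of_mem Prod.fst hz)
      · rw [disjoint_left]
        intro a ha haz
        have haW : a ∈ W := mem_biUnion.mpr ⟨z, hz, haz⟩
        rcases mem_insert.mp ha with rfl | ha'
        · exact hxW haW
        · rw [mem_singleton.mp ha'] at haW; exact hyW haW
    have hGood2 : GoodPairs H (insert (e, ({x,y} : Finset (Fin n))) M) := by
      constructor
      · intro z hz
        rcases mem_insert.mp hz with rfl | hz
        · refine ⟨heH, ?_, card_pair hxy⟩
          intro a ha
          rcases mem_insert.mp ha with rfl | ha'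
          · exact hxe
          · rw [mem_singleton.mp ha']; exact hye
        · exact hGoodM.1 z hz
      · intro z hz w hw hzw
        rcases mem_insert.mp hz with rfl | hz <;> rcases mem_insert.mp hw with hw' | hw
        · exact absurd hw'.symm hzw
        · exact hno w hw
        · rename_i hz'
          rw [hw']
          exact ⟨(hno z hz).1.symm, (hno z hz).2.symm⟩
        · exact hGoodM.2 z hz w hw hzw
    have := hmax_all _ hGood2
    rw [card_insert_of_notMem hnotin] at this
    omega
  -- split H
  set R : Finset (Finset (Fin n)) := H \ E₀ with hR
  have hHR : (R.card) + E₀.card = H.card := card_sdiff_add_card_eq_card hE₀sub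
  set S : Finset (Finset (Fin n)) := R.filter (fun e => e ⊆ W) with hS
  set Tf : Finset (Finset (Fin n)) := R.filter (fun e => ¬ e ⊆ W) with hTf
  have hRST : S.card + Tf.card = R.card := card_filter_add_card_filter_not _
  have hScard : S.card ≤ 2^(2*s) := by
    have h1' : S ⊆ W.powerset := fun e he => mem_powerset.mpr (mem_filter.mp he).2
    calc S.card ≤ W.powerset.card := card_le_card h1'
      _ = 2^W.card := card_powerset W
      _ ≤ 2^(2*s) := Nat.pow_le_pow_right (by norm_num) hWcard
  -- edges with one vertex outside W
  have hone : ∀ e ∈ Tf, (e \ W).card = 1 := by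
    intro e he
    obtain ⟨heR, hnsub⟩ := mem_filter.mp he
    obtain ⟨heH, heE⟩ := mem_sdiff.mp heR
    have hle := hmaxW e heH heE
    have hne : (e \ W).Nonempty := sdiff_nonempty.mpr hnsub
    have := card_pos.mpr hne
    omega
  set Vim : Finset (Finset (Fin n)) := Tf.image (fun e => e \ W) with hVim
  set fiber : Finset (Fin n) → Finset (Finset (Fin n)) :=
    fun X => Tf.filter (fun e => e \ W = X) with hfiber
  have hTfsum : Tf.card = ∑ X ∈ Vim, (fiber X).card := card_eq_sum_card_image _ _
  have hinterinj : ∀ X : Finset (Fin n), Set.InjOn (fun e => e ∩ W) ↑(fiber X) := by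
    intro X e1 he1 e2 he2 heq
    simp only [mem_coe, hfiber, mem_filter] at he1 he2
    have heq' : e1 ∩ W = e2 ∩ W := heq
    have h2 : (e1 \ W) ∪ (e1 ∩ W) = (e2 \ W) ∪ (e2 ∩ W) := by
      rw [he1.2, he2.2, heq']
    rwa [sdiff_union_inter, sdiff_union_inter] at h2
  have hfib_card : ∀ X, (fiber X).card ≤ 2^(2*s) := by
    intro X
    have h2' : (fiber X).image (fun e => e ∩ W) ⊆ W.powerset :=
      fun A hA => by
        obtain ⟨e, _, rfl⟩ := mem_image.mp hA
        exact mem_powerset.mpr inter_subset_right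
    calc (fiber X).card = ((fiber X).image (fun e => e ∩ W)).card :=
          (card_image_of_injOn (hinterinj X)).symm
      _ ≤ W.powerset.card := card_le_card h2'
      _ = 2^W.card := card_powerset W
      _ ≤ 2^(2*s) := Nat.pow_le_pow_right (by norm_num) hWcard
  set link : Finset (Fin n) → Finset (Finset (Fin n)) :=
    fun X => (fiber X).image (fun e => e ∩ W) with hlink
  have hlink_card : ∀ X, (link X).card = (fiber X).card :=
    fun X => card_image_of_injOn (hinterinj X)
  have hlink_mem : ∀ X A', A' ∈ link X → A' ∪ X ∈ H ∧ A' ⊆ W ∧ A'.card = r - 1 := by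
    intro X A' hA'
    obtain ⟨e, he, rfl⟩ := mem_image.mp hA'
    obtain ⟨heT, heX⟩ := mem_filter.mp he
    have heH : e ∈ H := (mem_sdiff.mp (mem_filter.mp heT).1).1
    have heuni : (e ∩ W) ∪ X = e := by rw [← heX, union_comm, sdiff_union_inter]
    have hc1 : (e \ W).card = 1 := hone e heT
    have hc := card_inter_add_card_sdiff e W
    refine ⟨by rw [heuni]; exact heH, inter_subset_right, ?_⟩
    rw [hU e heH] at hc
    omega
  set Vhi : Finset (Finset (Fin n)) := Vim.filter (fun X => p ≤ (fiber X).card) with hVhi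
  -- singletons
  have hVim_single : ∀ X ∈ Vim, ∃ v : Fin n, X = {v} ∧ v ∉ W := by
    intro X hX
    obtain ⟨e, he, rfl⟩ := mem_image.mp hX
    obtain ⟨v, hv⟩ := card_eq_one.mp (hone e he)
    refine ⟨v, hv, ?_⟩
    have : v ∈ e \ W := hv ▸ mem_singleton_self v
    exact (mem_sdiff.mp this).2
  -- few high-degree vertices
  have hVhi_card : Vhi.card ≤ (q-1) * 2^(2^(2*s)) := by
    by_contra hbig
    push_neg at hbig
    set C : Finset (Finset (Finset (Fin n))) := Finset.powersetCard p W.powerset with hC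
    have hCcard : C.card ≤ 2^(2^(2*s)) := by
      have hsub' : C ⊆ W.powerset.powerset :=
        fun A hA => mem_powerset.mpr (mem_powersetCard.mp hA).1
      calc C.card ≤ W.powerset.powerset.card := card_le_card hsub'
        _ = 2^(2^W.card) := by rw [card_powerset, card_powerset]
        _ ≤ 2^(2^(2*s)) := Nat.pow_le_pow_right (by norm_num)
            (Nat.pow_le_pow_right (by norm_num) hWcard)
    set FF : Finset (Fin n) → Finset (Finset (Fin n)) :=
      fun X => if h : p ≤ (link X).card then (Finset.exists_subset_card_eq h).choose
        else ∅ with hFF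
    have hFFspec : ∀ X, p ≤ (fiber X).card → FF X ⊆ link X ∧ (FF X).card = p := by
      intro X hX
      have hX' : p ≤ (link X).card := by rw [hlink_card]; exact hX
      simp only [hFF, dif_pos hX']
      exact (Finset.exists_subset_card_eq hX').choose_spec
    have hmaps : ∀ X ∈ Vhi, FF X ∈ C := by
      intro X hX
      have hX' : p ≤ (fiber X).card := (mem_filter.mp hX).2
      obtain ⟨hs1, hs2⟩ := hFFspec X hX'
      refine mem_powersetCard.mpr ⟨?_, hs2⟩
      intro A hA
      exact mem_powerset.mpr ((hlink_mem X A (hs1 hA)).2.1)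
    have hlt : C.card * (q-1) < Vhi.card := by
      calc C.card * (q-1) ≤ 2^(2^(2*s)) * (q-1) := Nat.mul_le_mul_right _ hCcard
        _ = (q-1) * 2^(2^(2*s)) := mul_comm _ _
        _ < Vhi.card := hbig
    obtain ⟨𝒜₀, h𝒜₀C, hql⟩ :=
      Finset.exists_lt_card_fiber_of_mul_lt_card_of_maps_to hmaps hlt
    obtain ⟨Vq, hVqsub, hVqcard⟩ := Finset.exists_subset_card_eq
      (show q ≤ (Vhi.filter (fun X => FF X = 𝒜₀)).card by omega)
    obtain ⟨h𝒜₀sub, h𝒜₀card⟩ := mem_powersetCard.mp h𝒜₀C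
    -- enumerate 𝒜₀
    set A : Fin p → Finset (Fin n) :=
      fun i => (𝒜₀.equivFin.symm (Fin.cast h𝒜₀card.symm i) : _) with hA
    have hAmem : ∀ i, A i ∈ 𝒜₀ := fun i => (𝒜₀.equivFin.symm (Fin.cast h𝒜₀card.symm i)).2
    have hAinj : Function.Injective A := by
      intro i j hij
      have := 𝒜₀.equivFin.symm.injective (Subtype.ext hij)
      simpa [Fin.ext_iff] using congrArg Fin.val this
    -- enumerate Vq
    set Xf : Fin q → Finset (Fin n) :=
      fun j => (Vq.equivFin.symm (Fin.cast hVqcard.symm j) : _) with hXf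
    have hXmem : ∀ j, Xf j ∈ Vq := fun j => (Vq.equivFin.symm (Fin.cast hVqcard.symm j)).2
    have hXinj : Function.Injective Xf := by
      intro i j hij
      have := Vq.equivFin.symm.injective (Subtype.ext hij)
      simpa [Fin.ext_iff] using congrArg Fin.val this
    have hXVhi : ∀ j, Xf j ∈ Vhi := fun j => (mem_filter.mp (hVqsub (hXmem j))).1
    have hXFF : ∀ j, FF (Xf j) = 𝒜₀ := fun j => (mem_filter.mp (hVqsub (hXmem j))).2
    -- extract vertices
    have hXsingle : ∀ j, ∃ v : Fin n, Xf j = {v} ∧ v ∉ W :=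
      fun j => hVim_single _ (mem_filter.mp (hXVhi j)).1
    set v : Fin q → Fin n := fun j => (hXsingle j).choose with hv
    have hvspec : ∀ j, Xf j = {v j} ∧ v j ∉ W := fun j => (hXsingle j).choose_spec
    have hvinj : Function.Injective v := by
      intro i j hij
      apply hXinj
      rw [(hvspec i).1, (hvspec j).1, hij]
    have hvW : ∀ j, v j ∉ W := fun j => (hvspec j).2
    -- link membership
    have hAlink : ∀ i j, A i ∈ link (Xf j) := by
      intro i j
      have h' : p ≤ (fiber (Xf j)).card := (mem_filter.mp (hXVhi j)).2
      exact (hFFspec _ h').1 (hXFF j ▸ hAmem i)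
    have hAH : ∀ i j, A i ∪ {v j} ∈ H := by
      intro i j
      have := (hlink_mem _ _ (hAlink i j)).1
      rwa [(hvspec j).1] at this
    have hAW : ∀ i, A i ⊆ W := by
      intro i
      have hq1 : 0 < q := lt_of_lt_of_le hp hpq
      exact (hlink_mem _ _ (hAlink i ⟨0, hq1⟩)).2.1
    have hAcard : ∀ i, (A i).card = r - 1 := by
      intro i
      have hq1 : 0 < q := lt_of_lt_of_le hp hpq
      exact (hlink_mem _ _ (hAlink i ⟨0, hq1⟩)).2.2
    -- Hall's condition and SDR
    have hall : ∀ (Sf : Finset (Fin p)), Sf.card ≤ (Sf.biUnion A).card := by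
      intro Sf
      rcases le_or_gt Sf.card 1 with hS1 | hS2
      · rcases Finset.eq_empty_or_nonempty Sf with rfl | ⟨i, hi⟩
        · simp
        · have hsub' : A i ⊆ Sf.biUnion A := subset_biUnion_of_mem A hi
          have := card_le_card hsub'
          rw [hAcard i] at this
          omega
      · obtain ⟨i, hi, j, hj, hij⟩ := Finset.one_lt_card.mp hS2
        have hAne : A i ≠ A j := fun h => hij (hAinj h)
        have hnsub : ¬ A j ⊆ A i := by
          intro hsub'
          exact hAne (Finset.eq_of_subset_of_card_le hsub'
            (by rw [hAcard i, hAcard j])).symm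
        obtain ⟨x, hxj, hxi⟩ := Finset.not_subset.mp hnsub
        have hins : insert x (A i) ⊆ Sf.biUnion A := by
          intro a ha
          rcases mem_insert.mp ha with rfl | ha'
          · exact mem_biUnion.mpr ⟨j, hj, hxj⟩
          · exact mem_biUnion.mpr ⟨i, hi, ha'⟩
        have hcard_ins : (insert x (A i)).card = r := by
          rw [card_insert_of_notMem hxi, hAcard i]
          omega
        have hSp : Sf.card ≤ p := by
          have := card_le_card (subset_univ Sf)
          simpa using this
        have := card_le_card hins
        rw [hcard_ins] at this
        omega
    obtain ⟨u, huinj, humem⟩ :=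
      (Finset.all_card_le_biUnion_card_iff_exists_injective A).mp hall
    apply hK
    apply berge_kpq_of_system A v u hAH hAinj hvinj huinj humem
    · exact fun j i hvj => hvW j (hAW i hvj)
    · exact fun i j hij => hvW j (hij ▸ hAW i (humem i))
  -- final count
  have hVimn : Vim.card ≤ n := by
    have hsub' : Vim ⊆ (univ : Finset (Fin n)).image (fun v => ({v} : Finset (Fin n))) := by
      intro X hX
      obtain ⟨v, hv, -⟩ := hVim_single X hX
      exact mem_image.mpr ⟨v, mem_univ v, hv.symm⟩
    calc Vim.card ≤ _ := card_le_card hsub'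
      _ ≤ (univ : Finset (Fin n)).card := card_image_le
      _ = n := by simp
  have hTfcard : Tf.card ≤ (q-1) * 2^(2^(2*s)) * 2^(2*s) + (p-1)*n := by
    rw [hTfsum, ← Finset.sum_filter_add_sum_filter_not Vim (fun X => p ≤ (fiber X).card)]
    have hhi : ∑ X ∈ Vim.filter (fun X => p ≤ (fiber X).card), (fiber X).card ≤
        Vhi.card * 2^(2*s) := by
      have := Finset.sum_le_card_nsmul Vhi (fun X => (fiber X).card) (2^(2*s))
        (fun X _ => hfib_card X)
      simpa [smul_eq_mul] using this
    have hlo : ∑ X ∈ Vim.filter (fun X => ¬ p ≤ (fiber X).card), (fiber X).card ≤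
        n * (p-1) := by
      have h2' := Finset.sum_le_card_nsmul (Vim.filter (fun X => ¬ p ≤ (fiber X).card))
        (fun X => (fiber X).card) (p-1)
        (fun X hX => by
          have hlt := (mem_filter.mp hX).2
          show (fiber X).card ≤ p - 1
          omega)
      have h3' : (Vim.filter (fun X => ¬ p ≤ (fiber X).card)).card ≤ n :=
        le_trans (card_le_card (filter_subset _ _)) hVimn
      calc _ ≤ (Vim.filter (fun X => ¬ p ≤ (fiber X).card)).card * (p-1) := by
            simpa [smul_eq_mul] using h2'
        _ ≤ n * (p-1) := Nat.mul_le_mul_right _ h3'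
    have hh : Vhi.card * 2^(2*s) ≤ (q-1) * 2^(2^(2*s)) * 2^(2*s) :=
      Nat.mul_le_mul_right _ hVhi_card
    calc _ ≤ Vhi.card * 2^(2*s) + n * (p-1) := Nat.add_le_add hhi hlo
      _ ≤ (q-1) * 2^(2^(2*s)) * 2^(2*s) + (p-1)*n := by
          rw [mul_comm n (p-1)]; exact Nat.add_le_add_right hh _
  -- assemble
  calc H.card = R.card + E₀.card := hHR.symm
    _ = (S.card + Tf.card) + E₀.card := by rw [hRST]
    _ ≤ (2^(2*s) + ((q-1) * 2^(2^(2*s)) * 2^(2*s) + (p-1)*n)) + s := by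
        exact Nat.add_le_add (Nat.add_le_add hScard hTfcard) hE₀card
    _ ≤ (p-1)*n + (s + 2^(2*s) + (q-1) * 2^(2^(2*s)) * 2^(2*s)) := le_of_eq (by ring)

lemma not_containsBerge_empty {α V : Type*} [DecidableEq α] [DecidableEq V]
    {F : Finset (Finset α)} (hF : F.Nonempty) :
    ¬ ContainsBerge F (∅ : Finset (Finset V)) := by
  rintro ⟨g, φ, -, -, hφ, -⟩
  obtain ⟨e, he⟩ := hF
  exact absurd (hφ e he) (notMem_empty _)

lemma exr_le {n r : ℕ} {Free : Finset (Finset (Fin n)) → Prop} (hfree : Free ∅) {K : ℕ}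
    (h : ∀ H, IsUniform r H → Free H → H.card ≤ K) : exr n r Free ≤ K := by
  apply csSup_le
  · exact ⟨0, ∅, fun e he => absurd he (notMem_empty e), hfree, card_empty⟩
  · rintro m ⟨H, hu, hf, rfl⟩
    exact h H hu hf

lemma le_exr {n r : ℕ} {Free : Finset (Finset (Fin n)) → Prop}
    (H : Finset (Finset (Fin n))) (hu : IsUniform r H) (hf : Free H) :
    H.card ≤ exr n r Free := by
  apply le_csSup
  · refine ⟨(univ : Finset (Finset (Fin n))).card, ?_⟩
    rintro m ⟨H', -, -, rfl⟩
    exact card_le_univ H'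
  · exact ⟨H, hu, hf, rfl⟩

lemma abs_helper {a b K : ℕ} (h1 : b ≤ a + K) (h2 : a ≤ b + K) : |(a:ℤ) - b| ≤ K := by
  rw [abs_le]
  constructor
  · have h := (Nat.cast_le (α := ℤ)).mpr h1
    push_cast at h
    linarith
  · have h := (Nat.cast_le (α := ℤ)).mpr h2
    push_cast at h
    linarith

/-- Theorem: for `1 ≤ p ≤ q` with `p ≤ r ≤ min{s, p+q-1}`,
`ex_r(n, BM_{s+1} ∪ BK_{p,q}) = (p-1)·n + O(1)`. -/
theorem exr_berge_matching_and_berge_Kpq_i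
    (s r p q : ℕ) (hs : 1 ≤ s) (hr : 2 ≤ r) (hp : 1 ≤ p) (hpq : p ≤ q)
    (h1 : p ≤ r) (h2 : r ≤ min s (p + q - 1)) :
    ∃ K n₀ : ℕ, ∀ n : ℕ, n₀ ≤ n →
      |(exr n r (fun H => ¬ ContainsBerge (matchingHG (s + 1)) H ∧
          ¬ ContainsBerge (completeBipartite p q) H) : ℤ) -
        (((p - 1) * n : ℕ) : ℤ)| ≤ (K : ℤ) := by
  have hrs : r ≤ s := le_trans h2 (min_le_left _ _)
  have hrq : r ≤ p + q - 1 := le_trans h2 (min_le_right _ _)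
  set Kup : ℕ := s + 2^(2*s) + (q-1) * 2^(2^(2*s)) * 2^(2*s) with hKup
  refine ⟨(p-1)*r + Kup, r, fun n hn => ?_⟩
  have hMne : (matchingHG (s+1)).Nonempty :=
    ⟨_, mem_image.mpr ⟨(0 : Fin (s+1)), mem_univ _, rfl⟩⟩
  have hCne : (completeBipartite p q).Nonempty :=
    ⟨_, mem_image.mpr ⟨((⟨0, hp⟩ : Fin p), (⟨0, le_trans hp hpq⟩ : Fin q)),
      mem_product.mpr ⟨mem_univ _, mem_univ _⟩, rfl⟩⟩
  have hfree0 : (¬ ContainsBerge (matchingHG (s + 1)) (∅ : Finset (Finset (Fin n))) ∧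
      ¬ ContainsBerge (completeBipartite p q) (∅ : Finset (Finset (Fin n)))) :=
    ⟨not_containsBerge_empty hMne, not_containsBerge_empty hCne⟩
  have hub : exr n r (fun H => ¬ ContainsBerge (matchingHG (s + 1)) H ∧
      ¬ ContainsBerge (completeBipartite p q) H) ≤ (p-1)*n + Kup :=
    exr_le hfree0 (fun H hu hf => upper_bound hr hp hpq h1 hrs hu hf.1 hf.2)
  obtain ⟨H₀, hu0, hf0, hc0⟩ := lower_construction hr hp hpq h1 hrs hrq hn
  have hlb : (p-1)*(n-r) ≤ exr n r (fun H => ¬ ContainsBerge (matchingHG (s + 1)) H ∧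
      ¬ ContainsBerge (completeBipartite p q) H) := hc0 ▸ le_exr H₀ hu0 hf0
  have hsplit : (p-1)*n = (p-1)*(n-r) + (p-1)*r := by
    rw [← Nat.mul_add, Nat.sub_add_cancel hn]
  apply abs_helper
  · calc (p-1)*n = (p-1)*(n-r) + (p-1)*r := hsplit
      _ ≤ _ + (p-1)*r := Nat.add_le_add_right hlb _
      _ ≤ _ + ((p-1)*r + Kup) := Nat.add_le_add_left (Nat.le_add_right _ _) _
  · exact le_trans hub (Nat.add_le_add_left (Nat.le_add_left _ _) _)
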